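/- For every real K, every real N > 1, every t ∈ [0,1] and every θ > 0 satisfying θ·√(max(K,0)/(N−1)) < π, the modified distortion coefficient dominates the reduced one: t^{1/N} · ( sin_{K/(N−1)}(tθ) / sin_{K/(N−1)}(θ) )^{1−1/N} ≥ sin_{K/N}(tθ) / sin_{K/N}(θ). -/

import Mathlib

open Real Filter Finset Topology

/-- The generalized sine function `sin_κ`. -/
noncomputable def sinK (κ x : ℝ) : ℝ :=
  if κ < 0 then Real.sinh (Real.sqrt (-κ) * x) / Real.sqrt (-κ)
  else if κ = 0 then x
  else Real.sin (Real.sqrt κ * x) / Real.sqrt κ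

lemma tendsto_euler_sinh_prod (x : ℝ) :
    Filter.Tendsto (fun n : ℕ => π * x * ∏ j ∈ Finset.range n, ((1 : ℝ) + x ^ 2 / ((j : ℝ) + 1) ^ 2))
      atTop (𝓝 <| Real.sinh (π * x)) := by
  convert (Complex.continuous_im.tendsto _).comp
      (Complex.tendsto_euler_sin_prod (x * Complex.I)) using 1
  · ext1 n
    rw [Function.comp_apply]
    have hprod : ∀ j ∈ Finset.range n, (1 : ℂ) - ((x:ℂ) * Complex.I) ^ 2 / ((j : ℂ) + 1) ^ 2
        = (((1 + x ^ 2 / ((j:ℝ)+1) ^ 2 : ℝ)) : ℂ) := by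
      intro j _
      push_cast
      rw [mul_pow, Complex.I_sq]; ring
    rw [Finset.prod_congr rfl hprod, ← Complex.ofReal_prod]
    have h2 : (π:ℂ) * ((x:ℂ) * Complex.I) * ((∏ j ∈ Finset.range n, ((1:ℝ) + x ^ 2 / ((j:ℝ)+1) ^ 2) : ℝ) : ℂ)
        = (((π * x * ∏ j ∈ Finset.range n, ((1:ℝ) + x ^ 2 / ((j:ℝ)+1) ^ 2) : ℝ)) : ℂ) * Complex.I := by
      push_cast; ring
    rw [h2, Complex.mul_I_im, Complex.ofReal_re]
  · have : (π : ℂ) * (x * Complex.I) = ((π * x : ℝ) : ℂ) * Complex.I := by push_cast; ring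
    rw [this, Complex.sin_mul_I, ← Complex.ofReal_sinh, Complex.mul_I_im, Complex.ofReal_re]

lemma sinK_euler (μ x : ℝ) :
    Filter.Tendsto (fun n : ℕ => x * ∏ j ∈ Finset.range n,
      ((1 : ℝ) - μ * x ^ 2 / (((j : ℝ) + 1) ^ 2 * π ^ 2))) atTop (𝓝 (sinK μ x)) := by
  rcases lt_trichotomy μ 0 with hμ | hμ | hμ
  · have hs : 0 < Real.sqrt (-μ) := Real.sqrt_pos.2 (by linarith)
    have key := tendsto_euler_sinh_prod (Real.sqrt (-μ) * x / π)
    have hsq : (Real.sqrt (-μ)) ^ 2 = -μ := Real.sq_sqrt (by linarith)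
    have hfun : ∀ n : ℕ, π * (Real.sqrt (-μ) * x / π) * ∏ j ∈ Finset.range n,
        ((1 : ℝ) + (Real.sqrt (-μ) * x / π) ^ 2 / ((j : ℝ) + 1) ^ 2)
        = Real.sqrt (-μ) * (x * ∏ j ∈ Finset.range n,
            ((1 : ℝ) - μ * x ^ 2 / (((j : ℝ) + 1) ^ 2 * π ^ 2))) := by
      intro n
      have : ∀ j ∈ Finset.range n, ((1 : ℝ) + (Real.sqrt (-μ) * x / π) ^ 2 / ((j : ℝ) + 1) ^ 2)
          = ((1 : ℝ) - μ * x ^ 2 / (((j : ℝ) + 1) ^ 2 * π ^ 2)) := by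
        intro j _
        have hj : ((j : ℝ) + 1) ^ 2 ≠ 0 := by positivity
        have hπ : (π : ℝ) ^ 2 ≠ 0 := by positivity
        field_simp [mul_pow, div_pow, hsq]
        rw [hsq]; ring
      rw [Finset.prod_congr rfl this]
      field_simp
    have key2 : Filter.Tendsto (fun n : ℕ => Real.sqrt (-μ) * (x * ∏ j ∈ Finset.range n,
        ((1 : ℝ) - μ * x ^ 2 / (((j : ℝ) + 1) ^ 2 * π ^ 2)))) atTop
        (𝓝 (Real.sinh (Real.sqrt (-μ) * x))) := by
      have : π * (Real.sqrt (-μ) * x / π) = Real.sqrt (-μ) * x := by field_simp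
      rw [← this]
      exact key.congr hfun
    have := key2.const_mul (Real.sqrt (-μ))⁻¹
    simp only [← mul_assoc, inv_mul_cancel₀ hs.ne', one_mul] at this
    have heq : (Real.sqrt (-μ))⁻¹ * Real.sinh (Real.sqrt (-μ) * x) = sinK μ x := by
      rw [sinK, if_pos hμ, inv_mul_eq_div]
    rwa [heq] at this
  · subst hμ
    simp only [sinK, lt_self_iff_false, if_false, if_pos rfl, zero_mul, zero_div, sub_zero,
      Finset.prod_const_one, mul_one]
    exact tendsto_const_nhds
  · have hs : 0 < Real.sqrt μ := Real.sqrt_pos.2 hμ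
    have key := Real.tendsto_euler_sin_prod (Real.sqrt μ * x / π)
    have hsq : (Real.sqrt μ) ^ 2 = μ := Real.sq_sqrt hμ.le
    have hfun : ∀ n : ℕ, π * (Real.sqrt μ * x / π) * ∏ j ∈ Finset.range n,
        ((1 : ℝ) - (Real.sqrt μ * x / π) ^ 2 / ((j : ℝ) + 1) ^ 2)
        = Real.sqrt μ * (x * ∏ j ∈ Finset.range n,
            ((1 : ℝ) - μ * x ^ 2 / (((j : ℝ) + 1) ^ 2 * π ^ 2))) := by
      intro n
      have : ∀ j ∈ Finset.range n, ((1 : ℝ) - (Real.sqrt μ * x / π) ^ 2 / ((j : ℝ) + 1) ^ 2)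
          = ((1 : ℝ) - μ * x ^ 2 / (((j : ℝ) + 1) ^ 2 * π ^ 2)) := by
        intro j _
        have hj : ((j : ℝ) + 1) ^ 2 ≠ 0 := by positivity
        have hπ : (π : ℝ) ^ 2 ≠ 0 := by positivity
        field_simp [mul_pow, div_pow, hsq]
        rw [hsq]; ring
      rw [Finset.prod_congr rfl this]
      field_simp
    have key2 : Filter.Tendsto (fun n : ℕ => Real.sqrt μ * (x * ∏ j ∈ Finset.range n,
        ((1 : ℝ) - μ * x ^ 2 / (((j : ℝ) + 1) ^ 2 * π ^ 2)))) atTop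
        (𝓝 (Real.sin (Real.sqrt μ * x))) := by
      have : π * (Real.sqrt μ * x / π) = Real.sqrt μ * x := by field_simp
      rw [← this]
      exact key.congr hfun
    have := key2.const_mul (Real.sqrt μ)⁻¹
    simp only [← mul_assoc, inv_mul_cancel₀ hs.ne', one_mul] at this
    have heq : (Real.sqrt μ)⁻¹ * Real.sin (Real.sqrt μ * x) = sinK μ x := by
      rw [sinK, if_neg (not_lt.2 hμ.le), if_neg hμ.ne', inv_mul_eq_div]
    rwa [heq] at this

lemma sqrt_mul_lt_pi {μ x θ : ℝ} (hμ : 0 < μ) (hxθ : x ≤ θ) (hθ : 0 < θ)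
    (h : μ * θ ^ 2 < π ^ 2) : Real.sqrt μ * x < π := by
  have h1 : Real.sqrt μ * θ < π := by
    have : Real.sqrt (μ * θ ^ 2) < Real.sqrt (π ^ 2) :=
      Real.sqrt_lt_sqrt (by positivity) h
    rwa [Real.sqrt_mul hμ.le, Real.sqrt_sq hθ.le, Real.sqrt_sq pi_pos.le] at this
  calc Real.sqrt μ * x ≤ Real.sqrt μ * θ :=
        mul_le_mul_of_nonneg_left hxθ (Real.sqrt_nonneg μ)
    _ < π := h1

lemma sinK_pos {μ θ : ℝ} (hθ : 0 < θ) (h : μ * θ ^ 2 < π ^ 2) : 0 < sinK μ θ := by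
  rcases lt_trichotomy μ 0 with hμ | hμ | hμ
  · rw [sinK, if_pos hμ]
    have hs : 0 < Real.sqrt (-μ) := Real.sqrt_pos.2 (by linarith)
    exact div_pos (by positivity) hs
  · subst hμ; simpa [sinK] using hθ
  · rw [sinK, if_neg (not_lt.2 hμ.le), if_neg hμ.ne']
    have hs : 0 < Real.sqrt μ := Real.sqrt_pos.2 hμ
    refine div_pos (Real.sin_pos_of_pos_of_lt_pi (by positivity) ?_) hs
    exact sqrt_mul_lt_pi hμ le_rfl hθ h

lemma sinK_nonneg {μ x θ : ℝ} (hx0 : 0 ≤ x) (hxθ : x ≤ θ) (hθ : 0 < θ)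
    (h : μ * θ ^ 2 < π ^ 2) : 0 ≤ sinK μ x := by
  rcases lt_trichotomy μ 0 with hμ | hμ | hμ
  · rw [sinK, if_pos hμ]
    have hs : 0 < Real.sqrt (-μ) := Real.sqrt_pos.2 (by linarith)
    exact div_nonneg (Real.sinh_nonneg_iff.2 (by positivity)) hs.le
  · subst hμ; simpa [sinK] using hx0
  · rw [sinK, if_neg (not_lt.2 hμ.le), if_neg hμ.ne']
    refine div_nonneg (Real.sin_nonneg_of_nonneg_of_le_pi (by positivity) ?_) (Real.sqrt_nonneg μ)
    exact (sqrt_mul_lt_pi hμ hxθ hθ h).le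

lemma G_key {σ A B : ℝ} (hσ0 : 0 ≤ σ) (hσ1 : σ ≤ 1) (hB : 0 < B) (hA : 0 < A)
    (hord : (B ≤ A ∧ A ≤ 1) ∨ (1 ≤ A ∧ A ≤ B)) :
    (σ * A + (1 - σ)) * B ^ σ ≤ (σ * B + (1 - σ)) * A ^ σ := by
  set G : ℝ → ℝ := fun x => (σ * x + (1 - σ)) * x ^ (-σ) with hG
  have hderiv : ∀ x : ℝ, 0 < x →
      HasDerivAt G (σ * (1 - σ) * (x - 1) * x ^ (-σ - 1)) x := by
    intro x hx
    have h1 : HasDerivAt (fun x : ℝ => σ * x + (1 - σ)) σ x := by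
      simpa using ((hasDerivAt_id x).const_mul σ).add_const (1 - σ)
    have h2 : HasDerivAt (fun x : ℝ => x ^ (-σ)) (-σ * x ^ (-σ - 1)) x :=
      Real.hasDerivAt_rpow_const (Or.inl hx.ne')
    have : HasDerivAt G (σ * x ^ (-σ) + (σ * x + (1 - σ)) * (-σ * x ^ (-σ - 1))) x := h1.mul h2
    convert this using 1
    have hxσ : x ^ (-σ) = x ^ (-σ - 1) * x := by
      rw [← Real.rpow_add_one hx.ne' (-σ - 1)]
      ring_nf
    rw [hxσ]
    ring
  have hcont : ∀ x : ℝ, 0 < x → ContinuousAt G x := fun x hx =>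
    (hderiv x hx).continuousAt
  have hGle : G A ≤ G B := by
    rcases hord with ⟨hBA, hA1⟩ | ⟨h1A, hAB⟩
    · have anti : AntitoneOn G (Set.Ioc 0 1) := by
        apply antitoneOn_of_deriv_nonpos (convex_Ioc 0 1)
        · exact fun x hx => (hcont x hx.1).continuousWithinAt
        · intro x hx
          rw [interior_Ioc] at hx
          exact (hderiv x hx.1).differentiableAt.differentiableWithinAt
        · intro x hx
          rw [interior_Ioc] at hx
          rw [(hderiv x hx.1).deriv]
          have hp : x ^ (-σ - 1) > 0 := Real.rpow_pos_of_pos hx.1 _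
          have h1 : 0 ≤ σ * (1 - σ) := mul_nonneg hσ0 (by linarith)
          have h2 : σ * (1 - σ) * (x - 1) ≤ 0 :=
            mul_nonpos_of_nonneg_of_nonpos h1 (by linarith [hx.2])
          exact mul_nonpos_of_nonpos_of_nonneg h2 hp.le
      exact anti ⟨hB, hBA.trans hA1⟩ ⟨hA, hA1⟩ hBA
    · have mono : MonotoneOn G (Set.Ici 1) := by
        apply monotoneOn_of_deriv_nonneg (convex_Ici 1)
        · exact fun x hx => (hcont x (lt_of_lt_of_le one_pos hx)).continuousWithinAt
        · intro x hx
          rw [interior_Ici] at hx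
          exact (hderiv x (lt_trans one_pos hx)).differentiableAt.differentiableWithinAt
        · intro x hx
          rw [interior_Ici] at hx
          rw [(hderiv x (lt_trans one_pos hx)).deriv]
          have hp : x ^ (-σ - 1) > 0 := Real.rpow_pos_of_pos (lt_trans one_pos hx) _
          have hx1 : (1:ℝ) < x := hx
          exact mul_nonneg (mul_nonneg (mul_nonneg hσ0 (by linarith)) (by linarith)) hp.le
      exact mono (Set.mem_Ici.2 h1A) (Set.mem_Ici.2 (h1A.trans hAB)) hAB
  have hApow : 0 < A ^ σ := Real.rpow_pos_of_pos hA σ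
  have hBpow : 0 < B ^ σ := Real.rpow_pos_of_pos hB σ
  have hGA : G A = (σ * A + (1 - σ)) / A ^ σ := by
    rw [hG]; simp only []
    rw [Real.rpow_neg hA.le, div_eq_mul_inv]
  have hGB : G B = (σ * B + (1 - σ)) / B ^ σ := by
    rw [hG]; simp only []
    rw [Real.rpow_neg hB.le, div_eq_mul_inv]
  rw [hGA, hGB, div_le_div_iff₀ hApow hBpow] at hGle
  linarith [hGle]

lemma term_pos {κ' c a : ℝ} (ha : 0 < a) (hv : κ' * c < a) {d : ℝ}
    (hd0 : 0 ≤ d) (hdc : d ≤ c) : 0 < 1 - κ' * d / a := by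
  rw [sub_pos, div_lt_one ha]
  rcases le_or_gt 0 κ' with h | h
  · calc κ' * d ≤ κ' * c := mul_le_mul_of_nonneg_left hdc h
      _ < a := hv
  · have : κ' * d ≤ 0 := mul_nonpos_of_nonpos_of_nonneg h.le hd0
    linarith

lemma factor_key {σ κ κ' b c a : ℝ} (hκ : κ = σ * κ') (hσ0 : 0 ≤ σ) (hσ1 : σ ≤ 1)
    (hb : 0 ≤ b) (hbc : b ≤ c) (ha : 0 < a) (hv : κ' * c < a) :
    (1 - κ * b / a) * (1 - κ' * c / a) ^ σ ≤ (1 - κ * c / a) * (1 - κ' * b / a) ^ σ := by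
  have hc0 : 0 ≤ c := hb.trans hbc
  set A : ℝ := 1 - κ' * b / a with hAdef
  set B : ℝ := 1 - κ' * c / a with hBdef
  have hB : 0 < B := term_pos ha hv hc0 le_rfl
  have hA : 0 < A := term_pos ha hv hb hbc
  have hia : (0:ℝ) ≤ a⁻¹ := (inv_pos.2 ha).le
  have hord : (B ≤ A ∧ A ≤ 1) ∨ (1 ≤ A ∧ A ≤ B) := by
    rcases le_or_gt 0 κ' with h | h
    · left
      have hba' : κ' * b ≤ κ' * c := mul_le_mul_of_nonneg_left hbc h
      have h1 : κ' * b / a ≤ κ' * c / a := by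
        rw [div_eq_mul_inv, div_eq_mul_inv]
        exact mul_le_mul_of_nonneg_right hba' hia
      have h2 : 0 ≤ κ' * b / a := div_nonneg (mul_nonneg h hb) ha.le
      constructor
      · rw [hAdef, hBdef]; linarith
      · rw [hAdef]; linarith
    · right
      have hcb' : κ' * c ≤ κ' * b := mul_le_mul_of_nonpos_left hbc h.le
      have h1 : κ' * c / a ≤ κ' * b / a := by
        rw [div_eq_mul_inv, div_eq_mul_inv]
        exact mul_le_mul_of_nonneg_right hcb' hia
      have h2 : κ' * b / a ≤ 0 := by
        rw [div_eq_mul_inv]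
        exact mul_nonpos_of_nonpos_of_nonneg (mul_nonpos_of_nonpos_of_nonneg h.le hb) hia
      constructor
      · rw [hAdef]; linarith
      · rw [hAdef, hBdef]; linarith
  have := G_key hσ0 hσ1 hB hA hord
  have e1 : 1 - κ * b / a = σ * A + (1 - σ) := by rw [hAdef, hκ]; ring
  have e2 : 1 - κ * c / a = σ * B + (1 - σ) := by rw [hBdef, hκ]; ring
  rw [e1, e2]
  exact this


set_option maxHeartbeats 1000000 in
/-- The modified distortion coefficient `τ_{K,N}^{(t)}(θ)` dominates the
reduced distortion coefficient `σ_{K,N}^{(t)}(θ)`. -/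
theorem distortion_tau_ge_sigma (K N t θ : ℝ) (hN : 1 < N)
    (ht0 : 0 ≤ t) (ht1 : t ≤ 1) (hθ : 0 < θ)
    (hπ : θ * Real.sqrt (max K 0 / (N - 1)) < Real.pi) :
    t ^ (1 / N) *
      (sinK (K / (N - 1)) (t * θ) / sinK (K / (N - 1)) θ) ^ (1 - 1 / N)
      ≥ sinK (K / N) (t * θ) / sinK (K / N) θ := by
  have hN0 : (0:ℝ) < N := by linarith
  have hN1 : (0:ℝ) < N - 1 := by linarith
  set lam : ℝ := 1 / N with hlamdef
  set σ : ℝ := 1 - lam with hσdef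
  set κ' : ℝ := K / (N - 1) with hκ'def
  set κ : ℝ := K / N with hκdef
  have hlam0 : 0 < lam := by rw [hlamdef]; positivity
  have hlam1 : lam < 1 := by
    rw [hlamdef, div_lt_one hN0]; linarith
  have hσ0 : 0 ≤ σ := by rw [hσdef]; linarith
  have hσ1 : σ ≤ 1 := by rw [hσdef]; linarith
  have hκeq : κ = σ * κ' := by
    rw [hκdef, hσdef, hκ'def, hlamdef]
    field_simp
  have hsum : lam + σ = 1 := by rw [hσdef]; ring
  -- the crucial bound κ' θ² < π²
  have hvθ : κ' * θ ^ 2 < π ^ 2 := by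
    rcases le_or_gt K 0 with hK | hK
    · have : κ' ≤ 0 := by
        rw [hκ'def]
        exact div_nonpos_of_nonpos_of_nonneg hK hN1.le
      have : κ' * θ ^ 2 ≤ 0 := mul_nonpos_of_nonpos_of_nonneg this (sq_nonneg θ)
      nlinarith [pi_pos]
    · have hmax : max K 0 = K := max_eq_left hK.le
      rw [hmax] at hπ
      have harg : (0:ℝ) ≤ K / (N - 1) := by positivity
      have hθs : 0 ≤ θ * Real.sqrt (K / (N - 1)) := by positivity
      have := mul_self_lt_mul_self hθs hπ
      have hsq : Real.sqrt (K / (N - 1)) * Real.sqrt (K / (N - 1)) = K / (N - 1) :=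
        Real.mul_self_sqrt harg
      rw [hκ'def]
      nlinarith [this, hsq]
  have hvθκ : κ * θ ^ 2 < π ^ 2 := by
    have he : κ * θ ^ 2 = σ * (κ' * θ ^ 2) := by rw [hκeq]; ring
    rcases le_or_gt (κ' * θ ^ 2) 0 with h | h
    · nlinarith [pi_pos, mul_nonpos_of_nonneg_of_nonpos hσ0 h]
    · nlinarith [mul_le_of_le_one_left h.le hσ1]
  -- positivity facts
  have htθ0 : 0 ≤ t * θ := mul_nonneg ht0 hθ.le
  have htθθ : t * θ ≤ θ := by nlinarith
  have hsθκ : 0 < sinK κ θ := sinK_pos hθ hvθκ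
  have hsθκ' : 0 < sinK κ' θ := sinK_pos hθ hvθ
  have hstθκ' : 0 ≤ sinK κ' (t * θ) := sinK_nonneg htθ0 htθθ hθ hvθ
  -- the main limit inequality
  have key : sinK κ (t * θ) * (sinK κ' θ) ^ σ ≤
      t ^ lam * sinK κ θ * (sinK κ' (t * θ)) ^ σ := by
    have hb0 : 0 ≤ (t * θ) ^ 2 := sq_nonneg _
    have hbc : (t * θ) ^ 2 ≤ θ ^ 2 := by nlinarith
    have haj : ∀ j : ℕ, (0:ℝ) < ((j : ℝ) + 1) ^ 2 * π ^ 2 := fun j => by positivity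
    have hπa : ∀ j : ℕ, π ^ 2 ≤ ((j : ℝ) + 1) ^ 2 * π ^ 2 := by
      intro j
      have hj0 : (0:ℝ) ≤ (j : ℝ) := Nat.cast_nonneg j
      have h1 : (1:ℝ) ≤ ((j : ℝ) + 1) ^ 2 := by nlinarith
      exact le_mul_of_one_le_left (sq_nonneg π) h1
    have hvaj : ∀ j : ℕ, κ' * θ ^ 2 < ((j : ℝ) + 1) ^ 2 * π ^ 2 :=
      fun j => hvθ.trans_le (hπa j)
    have hvajκ : ∀ j : ℕ, κ * θ ^ 2 < ((j : ℝ) + 1) ^ 2 * π ^ 2 :=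
      fun j => hvθκ.trans_le (hπa j)
    -- nonnegativity of all terms
    have hterm1 : ∀ j : ℕ, 0 < 1 - κ * (t * θ) ^ 2 / (((j : ℝ) + 1) ^ 2 * π ^ 2) :=
      fun j => term_pos (haj j) (hvajκ j) hb0 hbc
    have hterm2 : ∀ j : ℕ, 0 < 1 - κ' * θ ^ 2 / (((j : ℝ) + 1) ^ 2 * π ^ 2) :=
      fun j => term_pos (haj j) (hvaj j) (sq_nonneg θ) le_rfl
    have hterm3 : ∀ j : ℕ, 0 < 1 - κ * θ ^ 2 / (((j : ℝ) + 1) ^ 2 * π ^ 2) :=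
      fun j => term_pos (haj j) (hvajκ j) (sq_nonneg θ) le_rfl
    have hterm4 : ∀ j : ℕ, 0 < 1 - κ' * (t * θ) ^ 2 / (((j : ℝ) + 1) ^ 2 * π ^ 2) :=
      fun j => term_pos (haj j) (hvaj j) hb0 hbc
    refine le_of_tendsto_of_tendsto'
      ((sinK_euler κ (t * θ)).mul ((sinK_euler κ' θ).rpow_const (Or.inr hσ0)))
      (((tendsto_const_nhds.mul (sinK_euler κ θ)).mul
        ((sinK_euler κ' (t * θ)).rpow_const (Or.inr hσ0))))
      (fun n => ?_)
    -- the finite-product inequality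
    set P1 : ℝ := ∏ j ∈ Finset.range n, (1 - κ * (t * θ) ^ 2 / (((j : ℝ) + 1) ^ 2 * π ^ 2)) with hP1
    set P2 : ℝ := ∏ j ∈ Finset.range n, (1 - κ' * θ ^ 2 / (((j : ℝ) + 1) ^ 2 * π ^ 2)) with hP2
    set P3 : ℝ := ∏ j ∈ Finset.range n, (1 - κ * θ ^ 2 / (((j : ℝ) + 1) ^ 2 * π ^ 2)) with hP3
    set P4 : ℝ := ∏ j ∈ Finset.range n, (1 - κ' * (t * θ) ^ 2 / (((j : ℝ) + 1) ^ 2 * π ^ 2)) with hP4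
    have hP1n : 0 ≤ P1 := Finset.prod_nonneg fun j _ => (hterm1 j).le
    have hP2n : 0 ≤ P2 := Finset.prod_nonneg fun j _ => (hterm2 j).le
    have hP3n : 0 ≤ P3 := Finset.prod_nonneg fun j _ => (hterm3 j).le
    have hP4n : 0 ≤ P4 := Finset.prod_nonneg fun j _ => (hterm4 j).le
    have hprod : P1 * P2 ^ σ ≤ P3 * P4 ^ σ := by
      rw [hP1, hP2, hP3, hP4,
        ← Real.finset_prod_rpow _ _ (fun j _ => (hterm2 j).le) σ,
        ← Real.finset_prod_rpow _ _ (fun j _ => (hterm4 j).le) σ,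
        ← Finset.prod_mul_distrib, ← Finset.prod_mul_distrib]
      refine Finset.prod_le_prod (fun j _ => ?_) (fun j _ => ?_)
      · exact mul_nonneg (hterm1 j).le (Real.rpow_nonneg (hterm2 j).le σ)
      · exact factor_key hκeq hσ0 hσ1 hb0 hbc (haj j) (hvaj j)
    have htpow : t ^ lam * t ^ σ = t := by
      rw [← Real.rpow_add' ht0 (by rw [hsum]; norm_num), hsum, Real.rpow_one]
    calc t * θ * P1 * (θ * P2) ^ σ
        = (t * θ * θ ^ σ) * (P1 * P2 ^ σ) := by
          rw [Real.mul_rpow hθ.le hP2n]; ring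
      _ ≤ (t * θ * θ ^ σ) * (P3 * P4 ^ σ) := by
          apply mul_le_mul_of_nonneg_left hprod
          positivity
      _ = t ^ lam * (θ * P3) * (t * θ * P4) ^ σ := by
          rw [Real.mul_rpow (mul_nonneg ht0 hθ.le) hP4n, Real.mul_rpow ht0 hθ.le]
          linear_combination (-(θ * θ ^ σ * P3 * P4 ^ σ)) * htpow
  -- conclude
  rw [ge_iff_le, div_le_iff₀ hsθκ, Real.div_rpow hstθκ' hsθκ'.le]
  have hWσ : 0 < (sinK κ' θ) ^ σ := Real.rpow_pos_of_pos hsθκ' σ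
  rw [show t ^ lam * ((sinK κ' (t * θ)) ^ σ / (sinK κ' θ) ^ σ) * sinK κ θ
      = (t ^ lam * sinK κ θ * (sinK κ' (t * θ)) ^ σ) / (sinK κ' θ) ^ σ from by ring,
    le_div_iff₀ hWσ]
  exact key
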